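/- Consider the linear ODE v̇ = X(t)v on a Hilbert space, with X(t) = [[0, I], [−H(t), 0]] where H(t) is self-adjoint and ‖H(t) − I‖ ≤ 2c for all t. Then the solution satisfies ‖v(t)‖ ≤ e^{c|t|}‖v(0)‖, i.e., the time-t flow map Φ(t) satisfies ‖Φ(t)‖ ≤ e^{c|t|}. -/

import Mathlib

open Real

lemma stmt12_aux {H : Type*} [NormedAddCommGroup H] [InnerProductSpace ℂ H]
    (Ht : ℝ → H →L[ℂ] H)
    (c : ℝ) (hc : 0 ≤ c)
    (hnorm : ∀ t : ℝ, ‖Ht t - 1‖ ≤ 2 * c)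
    (v ν : ℝ → H)
    (hv : ∀ t : ℝ, HasDerivAt v (ν t) t)
    (hν : ∀ t : ℝ, HasDerivAt ν (-(Ht t (v t))) t)
    (t : ℝ) (ht : 0 ≤ t) :
    ‖v t‖ ^ 2 + ‖ν t‖ ^ 2 ≤ Real.exp (2 * c * t) * (‖v 0‖ ^ 2 + ‖ν 0‖ ^ 2) := by
  letI : InnerProductSpace ℝ H := InnerProductSpace.complexToReal
  set g : ℝ → ℝ := fun s => ‖v s‖ ^ 2 + ‖ν s‖ ^ 2 with hg_def
  set g' : ℝ → ℝ := fun s =>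
    2 * (inner ℝ (v s) (ν s) : ℝ) + 2 * (inner ℝ (ν s) (-(Ht s (v s))) : ℝ) with hg'_def
  have hgderiv : ∀ s, HasDerivAt g (g' s) s := fun s =>
    ((hv s).norm_sq).add ((hν s).norm_sq)
  have hgnn : ∀ s, 0 ≤ g s := fun s => by positivity
  have bound : ∀ s, ‖g' s‖ ≤ 2 * c * ‖g s‖ + 0 := by
    intro s
    have h1 : g' s = 2 * (inner ℝ (ν s) ((1 - Ht s) (v s)) : ℝ) := by
      simp only [hg'_def, ContinuousLinearMap.sub_apply, ContinuousLinearMap.one_apply,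
        inner_sub_right]
      rw [real_inner_comm (v s) (ν s)]
      ring_nf
      rw [inner_neg_right]
      ring
    have h2 : |(inner ℝ (ν s) ((1 - Ht s) (v s)) : ℝ)| ≤ ‖ν s‖ * (2 * c * ‖v s‖) := by
      refine (abs_real_inner_le_norm _ _).trans ?_
      gcongr
      calc ‖(1 - Ht s) (v s)‖ ≤ ‖(1 - Ht s : H →L[ℂ] H)‖ * ‖v s‖ :=
            ContinuousLinearMap.le_opNorm _ _
        _ ≤ 2 * c * ‖v s‖ := by
            gcongr
            rw [show (1 - Ht s : H →L[ℂ] H) = -(Ht s - 1) from (neg_sub _ _).symm, norm_neg]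
            exact hnorm s
    have h3 : 2 * ‖ν s‖ * ‖v s‖ ≤ ‖v s‖ ^ 2 + ‖ν s‖ ^ 2 := by nlinarith [sq_nonneg (‖v s‖ - ‖ν s‖)]
    rw [Real.norm_eq_abs, Real.norm_eq_abs, abs_of_nonneg (hgnn s), h1, abs_mul, abs_two,
      add_zero]
    calc 2 * |(inner ℝ (ν s) ((1 - Ht s) (v s)) : ℝ)| ≤ 2 * (‖ν s‖ * (2 * c * ‖v s‖)) := by gcongr
      _ = 2 * c * (2 * ‖ν s‖ * ‖v s‖) := by ring
      _ ≤ 2 * c * g s := by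
          show _ ≤ 2 * c * (‖v s‖ ^ 2 + ‖ν s‖ ^ 2)
          nlinarith
  have key := norm_le_gronwallBound_of_norm_deriv_right_le (f := g) (f' := g')
    (δ := ‖g 0‖) (K := 2 * c) (ε := 0) (a := 0) (b := t)
    (fun s _ => (hgderiv s).continuousAt.continuousWithinAt)
    (fun s _ => (hgderiv s).hasDerivWithinAt)
    le_rfl (fun s _ => bound s) t ⟨ht, le_rfl⟩
  rw [gronwallBound_ε0, sub_zero] at key
  calc g t = ‖g t‖ := (Real.norm_of_nonneg (hgnn t)).symm
    _ ≤ ‖g 0‖ * Real.exp (2 * c * t) := key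
    _ = Real.exp (2 * c * t) * (‖v 0‖ ^ 2 + ‖ν 0‖ ^ 2) := by
        rw [Real.norm_of_nonneg (hgnn 0)]; ring

lemma stmt12_sqrt {A B e : ℝ} (hA : 0 ≤ A) (he : 0 ≤ e)
    (h : A ≤ e ^ 2 * B) : Real.sqrt A ≤ e * Real.sqrt B := by
  rcases le_or_gt 0 B with hB | hB
  swap
  · have hA0 : A = 0 := le_antisymm (h.trans (by nlinarith [sq_nonneg e])) hA
    rw [hA0, Real.sqrt_zero]
    positivity
  calc Real.sqrt A ≤ Real.sqrt (e ^ 2 * B) := Real.sqrt_le_sqrt h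
    _ = e * Real.sqrt B := by
        rw [Real.sqrt_mul (by positivity), Real.sqrt_sq he]

/-- For the linear flow `v̇ = ν`, `ν̇ = −H(t)v` with `H(t)` self-adjoint and
`‖H(t) − I‖ ≤ 2c`, solutions satisfy `‖v(t)‖ ≤ e^{c|t|}‖v(0)‖` in the
Hilbert norm `‖(v,ν)‖ = √(‖v‖² + ‖ν‖²)`. -/
theorem stmt_12 {H : Type*} [NormedAddCommGroup H] [InnerProductSpace ℂ H]
    [CompleteSpace H]
    (Ht : ℝ → H →L[ℂ] H) (hcont : Continuous Ht)
    (hsa : ∀ t : ℝ, IsSelfAdjoint (Ht t))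
    (c : ℝ) (hc : 0 ≤ c)
    (hnorm : ∀ t : ℝ, ‖Ht t - 1‖ ≤ 2 * c)
    (v ν : ℝ → H)
    (hv : ∀ t : ℝ, HasDerivAt v (ν t) t)
    (hν : ∀ t : ℝ, HasDerivAt ν (-(Ht t (v t))) t) :
    ∀ t : ℝ,
      Real.sqrt (‖v t‖ ^ 2 + ‖ν t‖ ^ 2) ≤
        Real.exp (c * |t|) * Real.sqrt (‖v 0‖ ^ 2 + ‖ν 0‖ ^ 2) := by
  intro t
  have hexp : ∀ a : ℝ, Real.exp a ^ 2 = Real.exp (2 * a) := by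
    intro a; rw [sq, ← Real.exp_add]; ring_nf
  rcases le_or_gt 0 t with ht | ht
  · rw [abs_of_nonneg ht]
    refine stmt12_sqrt (by positivity) (Real.exp_nonneg _) ?_
    rw [hexp]
    have := stmt12_aux Ht c hc hnorm v ν hv hν t ht
    rw [← mul_assoc]
    exact this
  · rw [abs_of_neg ht]
    have hv' : ∀ s : ℝ, HasDerivAt (fun s => v (-s)) ((fun s => -ν (-s)) s) s := by
      intro s
      have := (hv (-s)).scomp s (hasDerivAt_neg s)
      simpa [Function.comp_def] using this
    have hν' : ∀ s : ℝ, HasDerivAt (fun s => -ν (-s))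
        (-((fun s => Ht (-s)) s ((fun s => v (-s)) s))) s := by
      intro s
      have := ((hν (-s)).scomp s (hasDerivAt_neg s)).neg
      simpa [Function.comp_def, Pi.neg_def] using this
    have := stmt12_aux (fun s => Ht (-s)) c hc (fun s => hnorm (-s))
      (fun s => v (-s)) (fun s => -ν (-s)) hv' hν' (-t) (by linarith)
    simp only [neg_neg, neg_zero, norm_neg] at this
    refine stmt12_sqrt (by positivity) (Real.exp_nonneg _) ?_
    rw [hexp]
    rw [← mul_assoc]
    exact this
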